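/- Let Ω be a bounded Lipschitz domain in ℝ^N, 0 < s < 1, and let ω ∈ C(Ω) ∩ L^r(Ω) for some r > 1 satisfy ω > 0 in Ω, ∫_Ω ω dx = 1, and K_ε := ess sup_{0 ≤ t ≤ ε} ∫_{δ^{-1}{t}} ω dH_{N-1} < ∞ for some ε > 0. Let v_s be the unique nonnegative minimizer of |·|_s on M_s, extended as zero outside Ω, and μ_s := inf{|u|_s : u ∈ M_s}. Then v_s > 0 in Ω and v_s is a viscosity solution of L_∞^- u + μ_s = 0 in Ω with u = 0 in ℝ^N∖Ω. -/

import Mathlib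

open MeasureTheory Metric Set Filter Topology
open scoped ENNReal NNReal

noncomputable section

/-- Euclidean space ℝ^N. -/
abbrev Euc (N : ℕ) := EuclideanSpace ℝ (Fin N)

variable {N : ℕ}

/-- Distance to the boundary of `Ω`. -/
def distBdry (Ω : Set (Euc N)) (x : Euc N) : ℝ := Metric.infDist x (frontier Ω)

/-- The β-Hölder seminorm `|u|_β` of `u` over the closure of `Ω`. -/
def holderSemi (β : ℝ) (Ω : Set (Euc N)) (u : Euc N → ℝ) : ℝ :=
  sSup {q : ℝ | ∃ x ∈ closure Ω, ∃ y ∈ closure Ω, x ≠ y ∧ q = |u x - u y| / dist x y ^ β}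

/-- Membership in `C_0^{0,β}(closure Ω)`: β-Hölder continuous on the closure of `Ω`
and vanishing on the boundary `∂Ω`. -/
def MemC0Holder (β : ℝ) (Ω : Set (Euc N)) (u : Euc N → ℝ) : Prop :=
  (∃ C : ℝ, ∀ x ∈ closure Ω, ∀ y ∈ closure Ω, |u x - u y| ≤ C * dist x y ^ β) ∧
  (∀ x ∈ frontier Ω, u x = 0)

/-- The p-th power `[u]_{s,p}^p` of the Gagliardo seminorm. -/
def gagliardo (N : ℕ) (s p : ℝ) (u : Euc N → ℝ) : ℝ≥0∞ :=
  ∫⁻ x : Euc N, ∫⁻ y : Euc N,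
    ENNReal.ofReal (|u x - u y| ^ p / dist x y ^ ((N : ℝ) + s * p))

/-- Membership in the fractional Sobolev space `W_0^{s,p}(Ω)`. -/
def MemW0 (s p : ℝ) (Ω : Set (Euc N)) (u : Euc N → ℝ) : Prop :=
  MemLp u (ENNReal.ofReal p) volume ∧ (∀ᵐ x : Euc N, x ∉ Ω → u x = 0) ∧
  gagliardo N s p u < ⊤

/-- `∫_Ω (log|u|)⁺ ω dx` as an extended nonnegative real. -/
def logIntPos (Ω : Set (Euc N)) (ω u : Euc N → ℝ) : ℝ≥0∞ :=
  ∫⁻ x in Ω, ENNReal.ofReal (ω x) * ENNReal.ofReal (Real.log |u x|)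

/-- `∫_Ω (log|u|)⁻ ω dx` as an extended nonnegative real,
with the convention `log 0 = -∞`. -/
def logIntNeg (Ω : Set (Euc N)) (ω u : Euc N → ℝ) : ℝ≥0∞ :=
  ∫⁻ x in Ω, ENNReal.ofReal (ω x) *
    (if u x = 0 then ⊤ else ENNReal.ofReal (-Real.log |u x|))

/-- The extended-real integral `∫_Ω (log|u|) ω dx` (which may equal `-∞`). -/
def logInt (Ω : Set (Euc N)) (ω u : Euc N → ℝ) : EReal :=
  (logIntPos Ω ω u : EReal) - (logIntNeg Ω ω u : EReal)

/-- The exponential map `EReal → ℝ≥0∞`, with `exp (-∞) = 0` and `exp ∞ = ∞`. -/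
def expE (x : EReal) : ℝ≥0∞ :=
  if x = ⊥ then 0 else if x = ⊤ then ⊤ else ENNReal.ofReal (Real.exp x.toReal)

/-- `k(u) := exp (∫_Ω (log|u|) ω dx)`. -/
def kval (Ω : Set (Euc N)) (ω u : Euc N → ℝ) : ℝ≥0∞ := expE (logInt Ω ω u)

/-- `Λ_p := inf { [u]_{s,p}^p : u ∈ M_p }` where
`M_p = {u ∈ W_0^{s,p}(Ω) : ∫_Ω (log|u|) ω dx = 0}`. -/
def LambdaP (N : ℕ) (s p : ℝ) (Ω : Set (Euc N)) (ω : Euc N → ℝ) : ℝ≥0∞ :=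
  sInf {Λ : ℝ≥0∞ | ∃ u : Euc N → ℝ,
    MemW0 s p Ω u ∧ logInt Ω ω u = 0 ∧ Λ = gagliardo N s p u}

/-- Membership in `M_s := {u ∈ C_0^{0,s}(closure Ω) : k(u) = 1}`. -/
def MemMs (s : ℝ) (Ω : Set (Euc N)) (ω u : Euc N → ℝ) : Prop :=
  MemC0Holder s Ω u ∧ kval Ω ω u = 1

/-- `μ_s := inf {|u|_s : u ∈ M_s}`. -/
def muS (s : ℝ) (Ω : Set (Euc N)) (ω : Euc N → ℝ) : ℝ :=
  sInf {m : ℝ | ∃ u : Euc N → ℝ, MemMs s Ω ω u ∧ m = holderSemi s Ω u}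

/-- `K_ε := ess sup_{0 ≤ t ≤ ε} ∫_{δ^{-1}{t}} ω dH_{N-1}`. -/
def Keps (N : ℕ) (Ω : Set (Euc N)) (ω : Euc N → ℝ) (ε : ℝ) : ℝ≥0∞ :=
  essSup (fun t : ℝ =>
      ∫⁻ x in distBdry Ω ⁻¹' {t}, ENNReal.ofReal (ω x)
        ∂(MeasureTheory.Measure.hausdorffMeasure ((N : ℝ) - 1)))
    (volume.restrict (Icc (0 : ℝ) ε))

/-- `u` is a weak solution of `(-Δ_p)^s u = Λ u⁻¹ ω` in `Ω`. -/
def IsWeakSolution (N : ℕ) (s p : ℝ) (Ω : Set (Euc N)) (ω : Euc N → ℝ) (Λ : ℝ)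
    (u : Euc N → ℝ) : Prop :=
  ∀ φ : Euc N → ℝ, MemW0 s p Ω φ →
    (∫ x : Euc N, ∫ y : Euc N,
        |u x - u y| ^ (p - 2) * (u x - u y) * (φ x - φ y) / dist x y ^ ((N : ℝ) + s * p))
      = Λ * ∫ x in Ω, (u x)⁻¹ * φ x * ω x

/-- `(L_∞^+ u)(x) := sup_{y ≠ x} (u(y)-u(x))/|y-x|^s`. -/
def Lplus (s : ℝ) (u : Euc N → ℝ) (x : Euc N) : ℝ :=
  ⨆ y : {y : Euc N // y ≠ x}, (u y.1 - u x) / dist y.1 x ^ s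

/-- `(L_∞^- u)(x) := inf_{y ≠ x} (u(y)-u(x))/|y-x|^s`. -/
def Lminus (s : ℝ) (u : Euc N → ℝ) (x : Euc N) : ℝ :=
  ⨅ y : {y : Euc N // y ≠ x}, (u y.1 - u x) / dist y.1 x ^ s

/-- `u` is a viscosity supersolution of `L u = 0` in `Ω`. -/
def IsViscSupersol (Ω : Set (Euc N)) (L : (Euc N → ℝ) → Euc N → ℝ)
    (u : Euc N → ℝ) : Prop :=
  ∀ x₀ ∈ Ω, ∀ φ : Euc N → ℝ, ContDiff ℝ 1 φ → HasCompactSupport φ →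
    φ x₀ = u x₀ → (∀ x, φ x ≤ u x) → L φ x₀ ≤ 0

/-- `u` is a viscosity subsolution of `L u = 0` in `Ω`. -/
def IsViscSubsol (Ω : Set (Euc N)) (L : (Euc N → ℝ) → Euc N → ℝ)
    (u : Euc N → ℝ) : Prop :=
  ∀ x₀ ∈ Ω, ∀ φ : Euc N → ℝ, ContDiff ℝ 1 φ → HasCompactSupport φ →
    φ x₀ = u x₀ → (∀ x, u x ≤ φ x) → 0 ≤ L φ x₀

/-! ### Auxiliary lemmas -/

section AuxLemmas

variable {N : ℕ}

lemma aux_rpow_add {x y s : ℝ} (hx : 0 ≤ x) (hy : 0 ≤ y) (hs0 : 0 ≤ s) (hs1 : s ≤ 1) :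
    (x + y) ^ s ≤ x ^ s + y ^ s := by
  have h := NNReal.rpow_add_le_add_rpow x.toNNReal y.toNNReal hs0 hs1
  have h2 := NNReal.coe_le_coe.2 h
  rw [NNReal.coe_rpow, NNReal.coe_add, NNReal.coe_add, NNReal.coe_rpow, NNReal.coe_rpow,
    Real.coe_toNNReal _ hx, Real.coe_toNNReal _ hy] at h2
  exact h2

lemma aux_rpow_abs_sub {a b s : ℝ} (ha : 0 ≤ a) (hb : 0 ≤ b) (hs0 : 0 ≤ s) (hs1 : s ≤ 1) :
    |a ^ s - b ^ s| ≤ |a - b| ^ s := by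
  have key : ∀ c d : ℝ, 0 ≤ c → 0 ≤ d → d ≤ c → c ^ s - d ^ s ≤ (c - d) ^ s := by
    intro c d hc hd hdc
    have h1 : c ^ s ≤ (c - d) ^ s + d ^ s := by
      have : c = (c - d) + d := by ring
      calc c ^ s = ((c - d) + d) ^ s := by rw [← this]
        _ ≤ (c - d) ^ s + d ^ s := aux_rpow_add (by linarith) hd hs0 hs1
    linarith
  rcases le_total b a with hba | hab
  · rw [abs_of_nonneg (by linarith : (0:ℝ) ≤ a - b),
      abs_of_nonneg (sub_nonneg.2 (Real.rpow_le_rpow hb hba hs0))]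
    exact key a b ha hb hba
  · rw [abs_of_nonpos (by linarith : a - b ≤ 0),
      abs_of_nonpos (sub_nonpos.2 (Real.rpow_le_rpow ha hab hs0)), neg_sub, neg_sub]
    exact key b a hb ha hab

lemma aux_enn_coe (a : ℝ≥0∞) (ha : a ≠ ⊤) : (a : EReal) = ((a.toReal : ℝ) : EReal) := by
  rw [← ENNReal.ofReal_toReal ha, EReal.coe_ennreal_ofReal, max_eq_left ENNReal.toReal_nonneg]
  simp [ENNReal.ofReal_toReal ha]

lemma aux_enn_coe_sub {a b : ℝ≥0∞} (ha : a ≠ ⊤) (hb : b ≠ ⊤) :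
    (a : EReal) - (b : EReal) = ((a.toReal - b.toReal : ℝ) : EReal) := by
  rw [aux_enn_coe a ha, aux_enn_coe b hb, ← EReal.coe_sub]

lemma aux_holderSemi_nonneg (β : ℝ) (Ω : Set (Euc N)) (u : Euc N → ℝ) :
    0 ≤ holderSemi β Ω u := by
  refine Real.sSup_nonneg ?_
  rintro q ⟨x, hx, y, hy, hxy, rfl⟩
  exact div_nonneg (abs_nonneg _) (Real.rpow_nonneg dist_nonneg _)

lemma aux_muS_nonneg (s : ℝ) (Ω : Set (Euc N)) (ω : Euc N → ℝ) : 0 ≤ muS s Ω ω := by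
  refine Real.sInf_nonneg ?_
  rintro m ⟨u, hu, rfl⟩
  exact aux_holderSemi_nonneg s Ω u

lemma aux_muS_le (s : ℝ) (Ω : Set (Euc N)) (ω u : Euc N → ℝ) (hu : MemMs s Ω ω u) :
    muS s Ω ω ≤ holderSemi s Ω u := by
  refine csInf_le ⟨0, ?_⟩ ⟨u, hu, rfl⟩
  rintro m ⟨w, hw, rfl⟩
  exact aux_holderSemi_nonneg s Ω w

lemma aux_expE_coe (x : ℝ) : expE (x : EReal) = ENNReal.ofReal (Real.exp x) := by
  rw [expE, if_neg (EReal.coe_ne_bot x), if_neg (EReal.coe_ne_top x), EReal.toReal_coe]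

lemma aux_kval_extract (Ω : Set (Euc N)) (ω u : Euc N → ℝ) (h : kval Ω ω u = 1) :
    logIntPos Ω ω u ≠ ⊤ ∧ logIntNeg Ω ω u ≠ ⊤ ∧ logIntPos Ω ω u = logIntNeg Ω ω u := by
  rw [kval, logInt] at h
  set P := logIntPos Ω ω u with hPdef
  set Nn := logIntNeg Ω ω u with hNdef
  have hN : Nn ≠ ⊤ := by
    intro hN
    rw [hN, EReal.coe_ennreal_top, sub_eq_add_neg, EReal.neg_top, EReal.add_bot, expE,
      if_pos rfl] at h
    exact zero_ne_one h
  have hP : P ≠ ⊤ := by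
    intro hP
    rw [hP, EReal.coe_ennreal_top, sub_eq_add_neg,
      EReal.top_add_of_ne_bot (by simp [EReal.neg_eq_bot_iff, EReal.coe_ennreal_eq_top_iff, hN]),
      expE, if_neg (by simp), if_pos rfl] at h
    exact ENNReal.top_ne_one h
  refine ⟨hP, hN, ?_⟩
  rw [aux_enn_coe_sub hP hN, aux_expE_coe, ENNReal.ofReal_eq_one, Real.exp_eq_one_iff] at h
  exact (ENNReal.toReal_eq_toReal_iff' hP hN).1 (by linarith)

lemma aux_kval_zero (Ω : Set (Euc N)) (hΩo : IsOpen Ω) (hne : Ω.Nonempty) (ω u : Euc N → ℝ)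
    (hω : ∀ x ∈ Ω, 0 < ω x) (hu : ∀ x ∈ Ω, u x = 0) : kval Ω ω u = 0 := by
  have hN : logIntNeg Ω ω u = ⊤ := by
    rw [logIntNeg]
    have : ∫⁻ x in Ω, ENNReal.ofReal (ω x) *
        (if u x = 0 then ⊤ else ENNReal.ofReal (-Real.log |u x|)) = ∫⁻ _ in Ω, (⊤:ℝ≥0∞) := by
      refine setLIntegral_congr_fun hΩo.measurableSet (fun x hx => ?_)
      rw [if_pos (hu x hx), ENNReal.mul_top]
      exact (ENNReal.ofReal_pos.2 (hω x hx)).ne'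
    rw [this, setLIntegral_const, ENNReal.top_mul (hΩo.measure_pos volume hne).ne']
  rw [kval, logInt, hN, EReal.coe_ennreal_top, sub_eq_add_neg, EReal.neg_top, EReal.add_bot,
    expE, if_pos rfl]

lemma aux_pos_repr (Ω : Set (Euc N)) (hΩm : MeasurableSet Ω) (ω u : Euc N → ℝ)
    (hω0 : ∀ x ∈ Ω, 0 ≤ ω x) :
    logIntPos Ω ω u = ∫⁻ x in Ω, ENNReal.ofReal (ω x * Real.log |u x|) := by
  rw [logIntPos]
  refine setLIntegral_congr_fun hΩm (fun x hx => ?_)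
  rw [ENNReal.ofReal_mul (hω0 x hx)]

lemma aux_neg_repr (Ω : Set (Euc N)) (hΩm : MeasurableSet Ω) (ω u : Euc N → ℝ)
    (hω0 : ∀ x ∈ Ω, 0 ≤ ω x) (hu0 : ∀ x ∈ Ω, u x ≠ 0) :
    logIntNeg Ω ω u = ∫⁻ x in Ω, ENNReal.ofReal (-(ω x * Real.log |u x|)) := by
  rw [logIntNeg]
  refine setLIntegral_congr_fun hΩm (fun x hx => ?_)
  rw [if_neg (hu0 x hx), ← ENNReal.ofReal_mul (hω0 x hx), mul_neg]

lemma aux_ofReal_abs_le (a : ℝ) :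
    ENNReal.ofReal |a| ≤ ENNReal.ofReal a + ENNReal.ofReal (-a) := by
  rcases le_total 0 a with h | h
  · rw [abs_of_nonneg h]; exact le_add_right le_rfl
  · rw [abs_of_nonpos h]; exact le_add_left le_rfl

lemma aux_integrable (Ω : Set (Euc N)) (hΩm : MeasurableSet Ω) (ω u : Euc N → ℝ)
    (hω0 : ∀ x ∈ Ω, 0 ≤ ω x) (hu0 : ∀ x ∈ Ω, u x ≠ 0)
    (hmeas : AEMeasurable (fun x => ω x * Real.log |u x|) (volume.restrict Ω))
    (hP : logIntPos Ω ω u ≠ ⊤) (hN : logIntNeg Ω ω u ≠ ⊤) :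
    Integrable (fun x => ω x * Real.log |u x|) (volume.restrict Ω) := by
  rw [aux_pos_repr Ω hΩm ω u hω0] at hP
  rw [aux_neg_repr Ω hΩm ω u hω0 hu0] at hN
  refine ⟨hmeas.aestronglyMeasurable, ?_⟩
  rw [hasFiniteIntegral_def]
  calc (∫⁻ x in Ω, ‖ω x * Real.log |u x|‖ₑ)
      = (∫⁻ x in Ω, ENNReal.ofReal (abs (ω x * Real.log (abs (u x))))) := by
        simp_rw [Real.enorm_eq_ofReal_abs]
    _ ≤ (∫⁻ x in Ω, (ENNReal.ofReal (ω x * Real.log |u x|)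
          + ENNReal.ofReal (-(ω x * Real.log |u x|)))) :=
        lintegral_mono fun x => aux_ofReal_abs_le _
    _ = (∫⁻ x in Ω, ENNReal.ofReal (ω x * Real.log |u x|))
          + (∫⁻ x in Ω, ENNReal.ofReal (-(ω x * Real.log |u x|))) :=
        lintegral_add_left' (by fun_prop) _
    _ < ⊤ := by
        rw [ENNReal.add_lt_top]
        exact ⟨hP.lt_top, hN.lt_top⟩

lemma aux_logInt_eq (Ω : Set (Euc N)) (hΩm : MeasurableSet Ω) (ω u : Euc N → ℝ)
    (hω0 : ∀ x ∈ Ω, 0 ≤ ω x) (hu0 : ∀ x ∈ Ω, u x ≠ 0)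
    (hInt : Integrable (fun x => ω x * Real.log |u x|) (volume.restrict Ω)) :
    logInt Ω ω u = (((∫ x in Ω, ω x * Real.log |u x|) : ℝ) : EReal) ∧
    (∫ x in Ω, ω x * Real.log |u x|) = (logIntPos Ω ω u).toReal - (logIntNeg Ω ω u).toReal := by
  have hiv := integral_eq_lintegral_pos_part_sub_lintegral_neg_part hInt
  have hP := aux_pos_repr Ω hΩm ω u hω0
  have hN := aux_neg_repr Ω hΩm ω u hω0 hu0
  have hPne : logIntPos Ω ω u ≠ ⊤ := by
    rw [hP]
    refine (lt_of_le_of_lt ?_ ((hasFiniteIntegral_def _ _).1 hInt.2)).ne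
    refine lintegral_mono fun x => ?_
    rw [Real.enorm_eq_ofReal_abs]
    exact ENNReal.ofReal_le_ofReal (le_abs_self _)
  have hNne : logIntNeg Ω ω u ≠ ⊤ := by
    rw [hN]
    refine (lt_of_le_of_lt ?_ ((hasFiniteIntegral_def _ _).1 hInt.2)).ne
    refine lintegral_mono fun x => ?_
    rw [Real.enorm_eq_ofReal_abs]
    exact ENNReal.ofReal_le_ofReal (neg_le_abs _)
  have h2 : (∫ x in Ω, ω x * Real.log |u x|)
      = (logIntPos Ω ω u).toReal - (logIntNeg Ω ω u).toReal := by
    rw [hiv, hP, hN]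
  refine ⟨?_, h2⟩
  rw [logInt, aux_enn_coe_sub hPne hNne, ← h2]

end AuxLemmas

set_option maxHeartbeats 1000000 in
/-- The unique nonnegative minimizer `v_s` of `|·|_s` on `M_s`, extended
by zero outside `Ω`, is strictly positive in `Ω` and is a viscosity solution of
`L_∞^- u + μ_s = 0` in `Ω` with `u = 0` in `ℝ^N ∖ Ω`. -/
theorem vs_viscosity_solution
    (N : ℕ) (Ω : Set (Euc N)) (hΩo : IsOpen Ω) (hΩb : Bornology.IsBounded Ω)
    (hΩc : IsConnected Ω)
    (s : ℝ) (hs0 : 0 < s) (hs1 : s < 1)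
    (ω : Euc N → ℝ) (hω_cont : ContinuousOn ω Ω) (hω_pos : ∀ x ∈ Ω, 0 < ω x)
    (hω_Lr : ∃ r : ℝ, 1 < r ∧ MemLp ω (ENNReal.ofReal r) (volume.restrict Ω))
    (hω_norm : ∫ x in Ω, ω x = 1)
    (hK : ∃ ε > (0 : ℝ), Keps N Ω ω ε < ⊤)
    (v : Euc N → ℝ) (hv : MemMs s Ω ω v) (hv_nn : ∀ x, 0 ≤ v x)
    (hv0 : ∀ x ∉ Ω, v x = 0) (hv_min : holderSemi s Ω v = muS s Ω ω)
    (hv_unique : ∀ w : Euc N → ℝ, MemMs s Ω ω w → (∀ x, 0 ≤ w x) →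
      (∀ x ∉ Ω, w x = 0) → holderSemi s Ω w = muS s Ω ω → w = v) :
    (∀ x ∈ Ω, 0 < v x) ∧
    IsViscSupersol Ω (fun φ x => Lminus s φ x + muS s Ω ω) v ∧
    IsViscSubsol Ω (fun φ x => Lminus s φ x + muS s Ω ω) v := by
  classical
  obtain ⟨x_w, hx_w⟩ := hΩc.nonempty
  have hΩne : Ω.Nonempty := ⟨x_w, hx_w⟩
  have hΩm : MeasurableSet Ω := hΩo.measurableSet
  have hμ0 : 0 ≤ muS s Ω ω := aux_muS_nonneg s Ω ω
  have hω0 : ∀ x ∈ Ω, 0 ≤ ω x := fun x hx => (hω_pos x hx).le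
  by_cases hfr : (frontier Ω).Nonempty
  swap
  · -- Degenerate case: `frontier Ω = ∅`, so the space is a subsingleton.
    rw [not_nonempty_iff_eq_empty] at hfr
    have hcl : IsClosed Ω := by
      refine isClosed_of_closure_subset ?_
      intro x hx
      by_contra hxn
      have : x ∈ frontier Ω := by
        rw [hΩo.frontier_eq]; exact ⟨hx, hxn⟩
      rw [hfr] at this
      exact this
    have huniv : Ω = univ := (isClopen_iff.mp ⟨hcl, hΩo⟩).resolve_left hΩne.ne_empty
    have hsub : Subsingleton (Euc N) := by
      by_contra hns
      have : Nontrivial (Euc N) := not_subsingleton_iff_nontrivial.1 hns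
      exact NormedSpace.unbounded_univ ℝ (Euc N) (huniv ▸ hΩb)
    have hμ : muS s Ω ω = 0 := by
      rw [← hv_min, holderSemi]
      convert Real.sSup_empty using 2
      refine eq_empty_iff_forall_notMem.2 ?_
      rintro q ⟨x, hx, y, hy, hxy, rfl⟩
      exact hxy (Subsingleton.elim x y)
    have hpos : ∀ x ∈ Ω, 0 < v x := by
      intro x hx
      rcases (hv_nn x).lt_or_eq with h | h
      · exact h
      · exfalso
        have hz : ∀ y ∈ Ω, v y = 0 := fun y _ => by rw [Subsingleton.elim y x, ← h]
        have h0 := aux_kval_zero Ω hΩo hΩne ω v hω_pos hz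
        rw [hv.2] at h0
        exact one_ne_zero h0
    have hemp : ∀ x₀ : Euc N, IsEmpty {y : Euc N // y ≠ x₀} :=
      fun x₀ => ⟨fun y => y.2 (Subsingleton.elim y.1 x₀)⟩
    refine ⟨hpos, ?_, ?_⟩
    · intro x₀ _ φ _ _ _ _
      haveI := hemp x₀
      show Lminus s φ x₀ + muS s Ω ω ≤ 0
      unfold Lminus
      rw [Real.iInf_of_isEmpty, hμ]
      norm_num
    · intro x₀ _ φ _ _ _ _
      haveI := hemp x₀
      show (0:ℝ) ≤ Lminus s φ x₀ + muS s Ω ω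
      unfold Lminus
      rw [Real.iInf_of_isEmpty, hμ]
      norm_num
  -- Main case: the frontier is nonempty.
  obtain ⟨z₀, hz₀⟩ := hfr
  have hfr : (frontier Ω).Nonempty := ⟨z₀, hz₀⟩
  set μ := muS s Ω ω with hμdef
  have hfrC : IsCompact (frontier Ω) :=
    Metric.isCompact_of_isClosed_isBounded isClosed_frontier
      (hΩb.closure.subset frontier_subset_closure)
  have hfrΩ : ∀ z ∈ frontier Ω, z ∉ Ω := by
    intro z hz
    rw [hΩo.frontier_eq] at hz
    exact hz.2
  have hvfr : ∀ z ∈ frontier Ω, v z = 0 := fun z hz => hv0 z (hfrΩ z hz)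
  have hδpos : ∀ x ∈ Ω, 0 < distBdry Ω x := by
    intro x hx
    exact (isClosed_frontier.notMem_iff_infDist_pos hfr).1 (fun h => hfrΩ x h hx)
  have hΩnu : Ω ≠ univ := by
    intro h
    rw [h, frontier_univ] at hz₀
    exact hz₀
  have hδle : ∀ x ∈ Ω, ∀ y, y ∉ Ω → distBdry Ω x ≤ dist x y := by
    intro x hx y hy
    obtain ⟨z, hzf, hzd⟩ := exists_mem_frontier_infDist_compl_eq_dist hx hΩnu
    calc distBdry Ω x ≤ dist x z := Metric.infDist_le_dist_of_mem hzf
      _ = Metric.infDist x Ωᶜ := hzd.symm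
      _ ≤ dist x y := Metric.infDist_le_dist_of_mem hy
  -- Hölder bound for v with constant μ
  have hL1 : ∀ x ∈ closure Ω, ∀ y ∈ closure Ω, |v x - v y| ≤ μ * dist x y ^ s := by
    intro x hx y hy
    rcases eq_or_ne x y with rfl | hxy
    · simp only [sub_self, abs_zero]
      exact mul_nonneg hμ0 (Real.rpow_nonneg dist_nonneg s)
    · have hd : (0:ℝ) < dist x y ^ s := Real.rpow_pos_of_pos (dist_pos.2 hxy) s
      obtain ⟨C, hC⟩ := hv.1.1
      have hbdd : BddAbove {q : ℝ | ∃ x ∈ closure Ω, ∃ y ∈ closure Ω, x ≠ y ∧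
          q = |v x - v y| / dist x y ^ s} := by
        refine ⟨max C 0, ?_⟩
        rintro q ⟨a, ha, b, hb, hab, rfl⟩
        have hdab : (0:ℝ) < dist a b ^ s := Real.rpow_pos_of_pos (dist_pos.2 hab) s
        refine le_max_of_le_left ?_
        rw [div_le_iff₀ hdab]
        exact hC a ha b hb
      have hmem : |v x - v y| / dist x y ^ s ∈ {q : ℝ | ∃ x ∈ closure Ω, ∃ y ∈ closure Ω,
          x ≠ y ∧ q = |v x - v y| / dist x y ^ s} := ⟨x, hx, y, hy, hxy, rfl⟩
      have hle := le_csSup hbdd hmem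
      have : |v x - v y| / dist x y ^ s ≤ μ := by
        rw [← hv_min]; exact hle
      calc |v x - v y| = (|v x - v y| / dist x y ^ s) * dist x y ^ s := by field_simp
        _ ≤ μ * dist x y ^ s := mul_le_mul_of_nonneg_right this hd.le
  -- μ is positive
  have hμpos : 0 < μ := by
    rcases hμ0.lt_or_eq with h | h
    · exact h
    · exfalso
      have hz : ∀ x ∈ Ω, v x = 0 := by
        intro x hx
        have h1 := hL1 x (subset_closure hx) z₀ (frontier_subset_closure hz₀)
        rw [← h, zero_mul] at h1
        have h2 : v x - v z₀ = 0 := abs_nonpos_iff.1 h1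
        have h3 := hvfr z₀ hz₀
        linarith
      have h0 := aux_kval_zero Ω hΩo hΩne ω v hω_pos hz
      rw [hv.2] at h0
      exact one_ne_zero h0
  -- upper bound: v ≤ μ δ^s
  have hL3 : ∀ x ∈ Ω, v x ≤ μ * distBdry Ω x ^ s := by
    intro x hx
    obtain ⟨z, hzf, hzd⟩ := hfrC.exists_infDist_eq_dist hfr x
    have h1 := hL1 x (subset_closure hx) z (frontier_subset_closure hzf)
    have h2 : v x ≤ |v x - v z| := by
      rw [hvfr z hzf, sub_zero]
      exact le_abs_self _
    have h3 : distBdry Ω x = dist x z := hzd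
    rw [← h3] at h1
    linarith
  -- The comparison function w = μ δ^s on Ω
  set w : Euc N → ℝ := fun x => if x ∈ Ω then μ * distBdry Ω x ^ s else 0 with hwdef
  have hw_out : ∀ x, x ∉ Ω → w x = 0 := fun x hx => if_neg hx
  have hw_in : ∀ x ∈ Ω, w x = μ * distBdry Ω x ^ s := fun x hx => if_pos hx
  have hw_posΩ : ∀ x ∈ Ω, 0 < w x := by
    intro x hx
    rw [hw_in x hx]
    exact mul_pos hμpos (Real.rpow_pos_of_pos (hδpos x hx) s)
  have hw_nn : ∀ x, 0 ≤ w x := by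
    intro x
    by_cases hx : x ∈ Ω
    · exact (hw_posΩ x hx).le
    · rw [hw_out x hx]
  have hvw : ∀ x, v x ≤ w x := by
    intro x
    by_cases hx : x ∈ Ω
    · rw [hw_in x hx]; exact hL3 x hx
    · rw [hv0 x hx, hw_out x hx]
  have hδlip : ∀ x y : Euc N, |distBdry Ω x - distBdry Ω y| ≤ dist x y := by
    intro x y
    rw [abs_sub_le_iff]
    constructor
    · have := Metric.infDist_le_infDist_add_dist (x := x) (y := y) (s := frontier Ω)
      rw [distBdry, distBdry]; linarith
    · have := Metric.infDist_le_infDist_add_dist (x := y) (y := x) (s := frontier Ω)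
      rw [distBdry, distBdry, dist_comm x y]; linarith
  have hw_holder : ∀ x ∈ closure Ω, ∀ y ∈ closure Ω, |w x - w y| ≤ μ * dist x y ^ s := by
    have key : ∀ x ∈ Ω, ∀ y ∈ closure Ω, |w x - w y| ≤ μ * dist x y ^ s := by
      intro x hx y hy
      by_cases hyΩ : y ∈ Ω
      · rw [hw_in x hx, hw_in y hyΩ, ← mul_sub, abs_mul, abs_of_nonneg hμ0]
        refine mul_le_mul_of_nonneg_left ?_ hμ0
        calc |distBdry Ω x ^ s - distBdry Ω y ^ s| ≤ |distBdry Ω x - distBdry Ω y| ^ s :=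
              aux_rpow_abs_sub Metric.infDist_nonneg Metric.infDist_nonneg hs0.le hs1.le
          _ ≤ dist x y ^ s := Real.rpow_le_rpow (abs_nonneg _) (hδlip x y) hs0.le
      · have hyf : y ∈ frontier Ω := by rw [hΩo.frontier_eq]; exact ⟨hy, hyΩ⟩
        have hnn : (0:ℝ) ≤ μ * distBdry Ω x ^ s :=
          mul_nonneg hμ0 (Real.rpow_nonneg Metric.infDist_nonneg s)
        rw [hw_out y hyΩ, sub_zero, hw_in x hx, abs_of_nonneg hnn]
        refine mul_le_mul_of_nonneg_left ?_ hμ0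
        exact Real.rpow_le_rpow Metric.infDist_nonneg
          (Metric.infDist_le_dist_of_mem hyf) hs0.le
    intro x hx y hy
    by_cases hxΩ : x ∈ Ω
    · exact key x hxΩ y hy
    by_cases hyΩ : y ∈ Ω
    · rw [abs_sub_comm, dist_comm]
      exact key y hyΩ x hx
    · rw [hw_out x hxΩ, hw_out y hyΩ, sub_self, abs_zero]
      exact mul_nonneg hμ0 (Real.rpow_nonneg dist_nonneg s)
  -- integrability infrastructure
  obtain ⟨PvT, NvT, hPN⟩ := aux_kval_extract Ω ω v hv.2
  have hNw_le : logIntNeg Ω ω w ≤ logIntNeg Ω ω v := by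
    rw [logIntNeg, logIntNeg]
    refine lintegral_mono_ae ((ae_restrict_iff' hΩm).2 (ae_of_all _ fun x hx => ?_))
    refine mul_le_mul_right ?_ _
    by_cases hvx : v x = 0
    · rw [if_pos hvx]; exact le_top
    · rw [if_neg hvx, if_neg (hw_posΩ x hx).ne']
      refine ENNReal.ofReal_le_ofReal (neg_le_neg ?_)
      rw [abs_of_nonneg (hv_nn x), abs_of_nonneg (hw_posΩ x hx).le]
      exact Real.log_le_log ((hv_nn x).lt_of_ne' hvx) (hvw x)
  have hPv_le : logIntPos Ω ω v ≤ logIntPos Ω ω w := by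
    rw [logIntPos, logIntPos]
    refine lintegral_mono_ae ((ae_restrict_iff' hΩm).2 (ae_of_all _ fun x hx => ?_))
    by_cases hvx : v x = 0
    · rw [hvx, abs_zero, Real.log_zero, ENNReal.ofReal_zero, mul_zero]
      exact zero_le
    · refine mul_le_mul_right (ENNReal.ofReal_le_ofReal ?_) _
      rw [abs_of_nonneg (hv_nn x), abs_of_nonneg (hw_posΩ x hx).le]
      exact Real.log_le_log ((hv_nn x).lt_of_ne' hvx) (hvw x)
    -- finiteness of the weighted log-integrals of w
  obtain ⟨r, hr1, hωLr⟩ := hω_Lr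
  haveI : IsFiniteMeasure (volume.restrict Ω) :=
    ⟨by rw [Measure.restrict_apply_univ]; exact hΩb.measure_lt_top⟩
  have hωInt : Integrable ω (volume.restrict Ω) :=
    hωLr.integrable (ENNReal.one_le_ofReal.2 hr1.le)
  have hωlint : (∫⁻ x in Ω, ENNReal.ofReal (ω x)) = 1 := by
    rw [← ofReal_integral_eq_lintegral_ofReal hωInt
      ((ae_restrict_iff' hΩm).2 (ae_of_all _ hω0)), hω_norm, ENNReal.ofReal_one]
  obtain ⟨R, hR⟩ := hΩb.subset_closedBall z₀
  set C₀ : ℝ := max 1 (μ * R ^ s) with hC₀def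
  have hC₀ : 1 ≤ C₀ := le_max_left _ _
  have hR0 : 0 ≤ R := le_trans dist_nonneg (hR hx_w)
  have hwbound : ∀ x ∈ Ω, w x ≤ C₀ := by
    intro x hx
    rw [hw_in x hx]
    refine le_max_of_le_right ?_
    refine mul_le_mul_of_nonneg_left ?_ hμ0
    refine Real.rpow_le_rpow Metric.infDist_nonneg ?_ hs0.le
    exact le_trans (Metric.infDist_le_dist_of_mem hz₀) (hR hx)
  have hPw_ne : logIntPos Ω ω w ≠ ⊤ := by
    have hle : logIntPos Ω ω w ≤
        ∫⁻ x in Ω, ENNReal.ofReal (ω x) * ENNReal.ofReal (Real.log C₀) := by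
      rw [logIntPos]
      refine lintegral_mono_ae ((ae_restrict_iff' hΩm).2 (ae_of_all _ fun x hx => ?_))
      refine mul_le_mul_right (ENNReal.ofReal_le_ofReal ?_) _
      rw [abs_of_nonneg (hw_posΩ x hx).le]
      exact Real.log_le_log (hw_posΩ x hx) (hwbound x hx)
    refine (lt_of_le_of_lt hle ?_).ne
    rw [lintegral_mul_const' (ENNReal.ofReal (Real.log C₀)) _ ENNReal.ofReal_ne_top, hωlint,
      one_mul]
    exact ENNReal.ofReal_lt_top
  have hNw_ne : logIntNeg Ω ω w ≠ ⊤ := (lt_of_le_of_lt hNw_le NvT.lt_top).ne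
  have hwne : ∀ x ∈ Ω, w x ≠ 0 := fun x hx => (hw_posΩ x hx).ne'
  -- measurability of the integrand
  have hWmeas : AEMeasurable (fun x => ω x * Real.log |w x|) (volume.restrict Ω) := by
    have hm0 : Measurable fun x : Euc N => μ * distBdry Ω x ^ s := by
      have : Measurable fun x : Euc N => distBdry Ω x :=
        (Metric.continuous_infDist_pt (frontier Ω)).measurable
      fun_prop
    have h1 : AEMeasurable (fun x => ω x * Real.log (abs (μ * distBdry Ω x ^ s)))
        (volume.restrict Ω) := by
      exact (hω_cont.aemeasurable hΩm).mul
        ((Real.measurable_log.comp (measurable_abs.comp hm0)).aemeasurable)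
    refine h1.congr ((ae_restrict_iff' hΩm).2 (ae_of_all _ fun x hx => ?_))
    show ω x * Real.log |μ * distBdry Ω x ^ s| = ω x * Real.log |w x|
    rw [hw_in x hx]
  have hgwInt : Integrable (fun x => ω x * Real.log |w x|) (volume.restrict Ω) :=
    aux_integrable Ω hΩm ω w hω0 hwne hWmeas hPw_ne hNw_ne
  obtain ⟨hlogw, htval⟩ := aux_logInt_eq Ω hΩm ω w hω0 hwne hgwInt
  set t : ℝ := ∫ x in Ω, ω x * Real.log |w x| with htdef
  have ht0 : 0 ≤ t := by
    rw [htval]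
    have h1 : (logIntPos Ω ω v).toReal ≤ (logIntPos Ω ω w).toReal :=
      ENNReal.toReal_mono hPw_ne hPv_le
    have h2 : (logIntNeg Ω ω w).toReal ≤ (logIntNeg Ω ω v).toReal :=
      ENNReal.toReal_mono NvT hNw_le
    have h3 : (logIntPos Ω ω v).toReal = (logIntNeg Ω ω v).toReal := by rw [hPN]
    linarith
  have hwC0 : MemC0Holder s Ω w := ⟨⟨μ, hw_holder⟩, fun z hz => hw_out z (hfrΩ z hz)⟩
  have hwsemi : holderSemi s Ω w ≤ μ := by
    refine Real.sSup_le ?_ hμ0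
    rintro q ⟨x, hx, y, hy, hxy, rfl⟩
    rw [div_le_iff₀ (Real.rpow_pos_of_pos (dist_pos.2 hxy) s)]
    exact hw_holder x hx y hy
  -- MAIN lower bound : μ δ^s ≤ v on Ω
  have hMAIN : ∀ x ∈ Ω, μ * distBdry Ω x ^ s ≤ v x := by
    rcases ht0.eq_or_lt with ht | ht
    · -- t = 0 : w belongs to M_s, is a minimizer, hence w = v.
      have hkw : kval Ω ω w = 1 := by
        rw [kval, hlogw, ← ht, aux_expE_coe, Real.exp_zero, ENNReal.ofReal_one]
      have hwM : MemMs s Ω ω w := ⟨hwC0, hkw⟩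
      have hwmin : holderSemi s Ω w = μ := le_antisymm hwsemi (aux_muS_le s Ω ω w hwM)
      have hwv : w = v := hv_unique w hwM hw_nn hw_out hwmin
      intro x hx
      rw [← hwv, hw_in x hx]
    · -- t > 0 : rescale w to contradict the minimality of μ.
      exfalso
      set c : ℝ := Real.exp t with hcdef
      have hcpos : 0 < c := Real.exp_pos t
      have hc1 : 1 < c := by
        have := Real.exp_lt_exp.2 ht
        rwa [Real.exp_zero] at this
      set w' : Euc N → ℝ := fun x => c⁻¹ * w x with hw'def
      have hw'pos : ∀ x ∈ Ω, 0 < w' x := fun x hx =>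
        mul_pos (inv_pos.2 hcpos) (hw_posΩ x hx)
      have hptw : ∀ x ∈ Ω, ω x * Real.log |w' x| = ω x * Real.log |w x| - ω x * Real.log c := by
        intro x hx
        rw [abs_of_pos (hw'pos x hx), abs_of_pos (hw_posΩ x hx)]
        show ω x * Real.log (c⁻¹ * w x) = _
        rw [Real.log_mul (inv_ne_zero hcpos.ne') (hw_posΩ x hx).ne', Real.log_inv]
        ring
      have hgw'Int : Integrable (fun x => ω x * Real.log |w' x|) (volume.restrict Ω) := by
        refine (hgwInt.sub (hωInt.mul_const (Real.log c))).congr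
          ((ae_restrict_iff' hΩm).2 (ae_of_all _ fun x hx => ?_))
        exact (hptw x hx).symm
      obtain ⟨hlogw', _⟩ := aux_logInt_eq Ω hΩm ω w' hω0
        (fun x hx => (hw'pos x hx).ne') hgw'Int
      have hint' : (∫ x in Ω, ω x * Real.log |w' x|) = 0 := by
        rw [setIntegral_congr_fun hΩm fun x hx => hptw x hx]
        rw [integral_sub hgwInt (hωInt.mul_const (Real.log c)),
          integral_mul_const (Real.log c) ω, hω_norm, ← htdef, hcdef, Real.log_exp]
        ring
      have hkw' : kval Ω ω w' = 1 := by
        rw [kval, hlogw', hint', aux_expE_coe, Real.exp_zero, ENNReal.ofReal_one]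
      have hw'M : MemMs s Ω ω w' := by
        refine ⟨⟨⟨c⁻¹ * μ, fun x hx y hy => ?_⟩, fun z hz => ?_⟩, hkw'⟩
        · show |c⁻¹ * w x - c⁻¹ * w y| ≤ c⁻¹ * μ * dist x y ^ s
          rw [← mul_sub, abs_mul, abs_of_pos (inv_pos.2 hcpos), mul_assoc]
          exact mul_le_mul_of_nonneg_left (hw_holder x hx y hy) (inv_pos.2 hcpos).le
        · show c⁻¹ * w z = 0
          rw [hw_out z (hfrΩ z hz), mul_zero]
      have hle' : holderSemi s Ω w' ≤ c⁻¹ * μ := by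
        refine Real.sSup_le ?_ (mul_nonneg (inv_pos.2 hcpos).le hμ0)
        rintro q ⟨x, hx, y, hy, hxy, rfl⟩
        rw [div_le_iff₀ (Real.rpow_pos_of_pos (dist_pos.2 hxy) s)]
        show |c⁻¹ * w x - c⁻¹ * w y| ≤ c⁻¹ * μ * dist x y ^ s
        rw [← mul_sub, abs_mul, abs_of_pos (inv_pos.2 hcpos), mul_assoc]
        exact mul_le_mul_of_nonneg_left (hw_holder x hx y hy) (inv_pos.2 hcpos).le
      have hge' : μ ≤ holderSemi s Ω w' := aux_muS_le s Ω ω w' hw'M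
      have hlt : c⁻¹ * μ < μ := by
        have : c⁻¹ < 1 := inv_lt_one_of_one_lt₀ hc1
        nlinarith
      linarith
  -- positivity
  have hpos : ∀ x ∈ Ω, 0 < v x := fun x hx =>
    lt_of_lt_of_le (mul_pos hμpos (Real.rpow_pos_of_pos (hδpos x hx) s)) (hMAIN x hx)
  refine ⟨hpos, ?_, ?_⟩
  · -- viscosity supersolution
    intro x₀ hx₀ φ hφ1 hφc hφeq hφle
    obtain ⟨z, hzf, hzd⟩ := hfrC.exists_infDist_eq_dist hfr x₀
    have hzx : z ≠ x₀ := fun h => hfrΩ z hzf (h ▸ hx₀)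
    have hδx : 0 < distBdry Ω x₀ := hδpos x₀ hx₀
    have hdzx : dist z x₀ = distBdry Ω x₀ := by rw [dist_comm]; exact hzd.symm
    obtain ⟨K, hK⟩ := hφ1.lipschitzWith_of_hasCompactSupport hφc one_ne_zero
    obtain ⟨M, hM⟩ := hφc.exists_bound_of_continuous hφ1.continuous
    have hM0 : 0 ≤ M := le_trans (norm_nonneg _) (hM x₀)
    have hbdd : BddBelow (Set.range fun y : {y : Euc N // y ≠ x₀} =>
        (φ y.1 - φ x₀) / dist y.1 x₀ ^ s) := by
      refine ⟨-((K:ℝ) + 2 * M), ?_⟩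
      rintro q ⟨⟨y, hy⟩, rfl⟩
      simp only
      have hd : 0 < dist y x₀ := dist_pos.2 hy
      have hds : 0 < dist y x₀ ^ s := Real.rpow_pos_of_pos hd s
      rw [le_div_iff₀ hds]
      have habs : |φ x₀ - φ y| ≤ (K:ℝ) * dist y x₀ := by
        have := hK.dist_le_mul x₀ y
        rw [Real.dist_eq, dist_comm x₀ y] at this
        exact this
      have habs2 : |φ x₀ - φ y| ≤ 2 * M := by
        have h1 := hM x₀
        have h2 := hM y
        rw [Real.norm_eq_abs] at h1 h2
        have := abs_sub (φ x₀) (φ y)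
        calc |φ x₀ - φ y| ≤ |φ x₀| + |φ y| := abs_sub _ _
          _ ≤ 2 * M := by linarith
      rcases le_total (dist y x₀) 1 with h1 | h1
      · have hde : dist y x₀ ≤ dist y x₀ ^ s := by
          have := Real.rpow_le_rpow_of_exponent_ge hd h1 hs1.le
          rwa [Real.rpow_one] at this
        have h2 : φ x₀ - φ y ≤ (K:ℝ) * dist y x₀ ^ s := by
          have h4 := le_of_abs_le habs
          nlinarith [NNReal.coe_nonneg K]
        nlinarith [mul_nonneg hM0 hds.le]
      · have h3 : (1:ℝ) ≤ dist y x₀ ^ s := Real.one_le_rpow h1 hs0.le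
        have h2 : φ x₀ - φ y ≤ 2 * M := le_of_abs_le habs2
        nlinarith [NNReal.coe_nonneg K, mul_nonneg (NNReal.coe_nonneg K) hds.le,
          mul_nonneg hM0 (sub_nonneg.2 h3)]
    have hLle : Lminus s φ x₀ ≤ (φ z - φ x₀) / dist z x₀ ^ s := by
      have h0 : Lminus s φ x₀ =
          ⨅ y : {y : Euc N // y ≠ x₀}, (φ y.1 - φ x₀) / dist y.1 x₀ ^ s := rfl
      rw [h0]
      exact ciInf_le hbdd (⟨z, hzx⟩ : {y : Euc N // y ≠ x₀})
    have hstep : (φ z - φ x₀) / dist z x₀ ^ s ≤ -μ := by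
      have hφz : φ z ≤ 0 := (hφle z).trans_eq (hv0 z (hfrΩ z hzf))
      have hd : 0 < dist z x₀ ^ s := by
        rw [hdzx]
        exact Real.rpow_pos_of_pos hδx s
      rw [div_le_iff₀ hd, hdzx]
      have h5 : μ * distBdry Ω x₀ ^ s ≤ v x₀ := hMAIN x₀ hx₀
      have h6 : φ x₀ = v x₀ := hφeq
      linarith
    show Lminus s φ x₀ + μ ≤ 0
    linarith
  · -- viscosity subsolution
    intro x₀ hx₀ φ hφ1 hφc hφeq hφge
    haveI hne : Nonempty {y : Euc N // y ≠ x₀} :=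
      ⟨⟨z₀, fun h => hfrΩ z₀ hz₀ (h ▸ hx₀)⟩⟩
    have hkey : -μ ≤ Lminus s φ x₀ := by
      have h0 : Lminus s φ x₀ =
          ⨅ y : {y : Euc N // y ≠ x₀}, (φ y.1 - φ x₀) / dist y.1 x₀ ^ s := rfl
      rw [h0]
      refine le_ciInf fun yy => ?_
      obtain ⟨y, hy⟩ := yy
      simp only
      have hd : 0 < dist y x₀ ^ s := Real.rpow_pos_of_pos (dist_pos.2 hy) s
      rw [le_div_iff₀ hd]
      have h1 : φ x₀ - φ y ≤ v x₀ - v y := by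
        have := hφge y
        have := hφeq
        linarith
      have hdc : dist y x₀ = dist x₀ y := dist_comm y x₀
      by_cases hyc : y ∈ closure Ω
      · have h2 : v x₀ - v y ≤ μ * dist x₀ y ^ s :=
          le_trans (le_abs_self _) (hL1 x₀ (subset_closure hx₀) y hyc)
        rw [hdc]
        linarith
      · have hyn : y ∉ Ω := fun h => hyc (subset_closure h)
        have h2 : v y = 0 := hv0 y hyn
        have h3 : v x₀ ≤ μ * distBdry Ω x₀ ^ s := hL3 x₀ hx₀
        have h5 : μ * distBdry Ω x₀ ^ s ≤ μ * dist x₀ y ^ s :=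
          mul_le_mul_of_nonneg_left
            (Real.rpow_le_rpow Metric.infDist_nonneg (hδle x₀ hx₀ y hyn) hs0.le) hμ0
        rw [hdc]
        linarith
    show (0:ℝ) ≤ Lminus s φ x₀ + μ
    linarith
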